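/- Let G be a simple graph on n vertices with adjacency matrix A, and let θ ∈ ℝ^n be a second-order stationary point of the Kuramoto energy E_G(θ) = (1/2)·Σ_{i,j} A_{ij}(1 − cos(θ_i − θ_j)), i.e., the gradient of E_G vanishes at θ and the Hessian of E_G at θ is positive semidefinite. Then for every vertex i, either Σ_{j ∈ N(i)} v_j = 0, or Σ_{j ∈ N(i)} v_j = μ v_i for some real μ > 0, where v_k = (cos θ_k, sin θ_k) is the phasor of vertex k. Equivalently, there exists μ_i ≥ 0 with Σ_{j ∈ N(i)} v_j = μ_i v_i. -/

import Mathlib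

open Finset

/-- The phasor of vertex `i` at state `θ`: the unit vector `(cos θᵢ, sin θᵢ) ∈ ℝ²`. -/
noncomputable def phasor {V : Type*} (θ : V → ℝ) (i : V) : ℝ × ℝ :=
  (Real.cos (θ i), Real.sin (θ i))

/-- The Kuramoto energy `E_G(θ) = (1/2)·Σ_{i,j} A_{ij}(1 − cos(θ_i − θ_j))`. -/
noncomputable def kuramotoEnergy {V : Type*} [Fintype V] (G : SimpleGraph V)
    [DecidableRel G.Adj] (θ : V → ℝ) : ℝ :=
  (1 / 2) * ∑ i, ∑ j, (if G.Adj i j then (1 : ℝ) else 0) * (1 - Real.cos (θ i - θ j))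

/-- The Hessian of the Kuramoto energy at `θ`: off-diagonal entries
`−A_{ij} cos(θ_i − θ_j)` and diagonal entries `Σ_{k ≠ i} A_{ik} cos(θ_i − θ_k)`. -/
noncomputable def kuramotoHessian {V : Type*} [Fintype V] [DecidableEq V] (G : SimpleGraph V)
    [DecidableRel G.Adj] (θ : V → ℝ) : Matrix V V ℝ :=
  Matrix.of fun i j =>
    if i = j then ∑ k ∈ Finset.univ.erase i, (if G.Adj i k then Real.cos (θ i - θ k) else 0)
    else -(if G.Adj i j then Real.cos (θ i - θ j) else 0)

/-- `θ` is a second-order stationary point of the Kuramoto energy: the gradient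
`(∇E_G(θ))_i = Σ_j A_{ij} sin(θ_i − θ_j)` vanishes and the Hessian is positive
semidefinite. -/
def IsSOSP {V : Type*} [Fintype V] [DecidableEq V] (G : SimpleGraph V)
    [DecidableRel G.Adj] (θ : V → ℝ) : Prop :=
  (∀ i, ∑ j, (if G.Adj i j then (1 : ℝ) else 0) * Real.sin (θ i - θ j) = 0) ∧
  (kuramotoHessian G θ).PosSemidef

/-- If `θ` is a second-order stationary point of the Kuramoto energy, then for every
vertex `i` there exists `μᵢ ≥ 0` with `Σ_{j ∈ N(i)} v_j = μᵢ v_i`; equivalently, either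
the neighbour phasor sum vanishes or it is a strictly positive multiple of `v_i`. -/
theorem stmt_1 {n : ℕ} (G : SimpleGraph (Fin n)) [DecidableRel G.Adj] (θ : Fin n → ℝ)
    (hθ : IsSOSP G θ) :
    ∀ i, ∃ μ : ℝ, 0 ≤ μ ∧
      ∑ j ∈ G.neighborFinset i, phasor θ j = μ • phasor θ i := by
  obtain ⟨hgrad, hherm, hquad⟩ := hθ
  intro i
  refine ⟨∑ j ∈ G.neighborFinset i, Real.cos (θ i - θ j), ?_, ?_⟩
  · have h0 : (0:ℝ) ≤ dotProduct (star (Pi.single i 1))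
        ((kuramotoHessian G θ).mulVec (Pi.single i 1)) := (Matrix.posSemidef_iff_dotProduct_mulVec.mp ⟨hherm, hquad⟩).2 (Pi.single i 1)
    have hii : dotProduct (star (Pi.single i (1:ℝ)))
        ((kuramotoHessian G θ).mulVec (Pi.single i 1)) = kuramotoHessian G θ i i := by
      simp [dotProduct, Matrix.mulVec, Pi.single_apply, Finset.sum_ite_eq',
        Finset.sum_ite_eq]
    rw [hii] at h0
    have : kuramotoHessian G θ i i = ∑ j ∈ G.neighborFinset i, Real.cos (θ i - θ j) := by
      simp only [kuramotoHessian, Matrix.of_apply, if_pos rfl]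
      rw [SimpleGraph.neighborFinset_eq_filter, Finset.sum_filter,
        Finset.sum_erase _ (by simp)]
      simp
    linarith
  · have hsin : ∑ j ∈ G.neighborFinset i, Real.sin (θ i - θ j) = 0 := by
      have := hgrad i
      rw [SimpleGraph.neighborFinset_eq_filter, Finset.sum_filter]
      simpa [ite_mul] using this
    have : ∑ j ∈ G.neighborFinset i, phasor θ j
        = ((∑ j ∈ G.neighborFinset i, Real.cos (θ i - θ j)) * Real.cos (θ i)
            + (∑ j ∈ G.neighborFinset i, Real.sin (θ i - θ j)) * Real.sin (θ i),
           (∑ j ∈ G.neighborFinset i, Real.cos (θ i - θ j)) * Real.sin (θ i)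
            - (∑ j ∈ G.neighborFinset i, Real.sin (θ i - θ j)) * Real.cos (θ i)) := by
      rw [Prod.ext_iff]
      constructor
      · rw [Prod.fst_sum]
        simp only [phasor, Finset.sum_mul, ← Finset.sum_add_distrib]
        refine Finset.sum_congr rfl fun j _ => ?_
        have := Real.cos_sub (θ i) (θ i - θ j)
        simp only [sub_sub_cancel] at this
        rw [this]; ring
      · rw [Prod.snd_sum]
        simp only [phasor, Finset.sum_mul, ← Finset.sum_sub_distrib]
        refine Finset.sum_congr rfl fun j _ => ?_
        have := Real.sin_sub (θ i) (θ i - θ j)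
        simp only [sub_sub_cancel] at this
        rw [this]; ring
    rw [this, hsin]
    simp [phasor, Prod.ext_iff, mul_comm]
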